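/- Let σ : {0,1}^n → ℝ be defined by σ(x) = √2 · (-1)^{Q(x)} if |x| is even and σ(x) = 0 if |x| is odd, where Q(x) = Σ_{i<j} x_i x_j. Then its Fourier transform satisfies σ̂(x) = √2 · cos(π(n - 2|x|)/4) for all x. In particular, if n is odd then |σ̂(x)| = 1 for all x. -/

import Mathlib

open Finset Real

/-- numeric value of a bit -/
def bit (b : Bool) : ℕ := if b then 1 else 0

/-- quadratic function Q(x) = Σ_{i<j} x_i x_j -/
def Q {n : ℕ} (x : Fin n → Bool) : ℕ :=
  ∑ i : Fin n, ∑ j : Fin n, if i < j then bit (x i) * bit (x j) else 0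

/-- Hamming weight -/
def wt {n : ℕ} (x : Fin n → Bool) : ℕ := ∑ i : Fin n, bit (x i)

/-- inner product (before reduction mod 2) -/
def ip {n : ℕ} (x y : Fin n → Bool) : ℕ := ∑ i : Fin n, bit (x i) * bit (y i)

/-- bitwise XOR -/
def xorv {n : ℕ} (x y : Fin n → Bool) : Fin n → Bool := fun i => xor (x i) (y i)

noncomputable def σeven {n : ℕ} (x : Fin n → Bool) : ℝ :=
  if Even (wt x) then Real.sqrt 2 * (-1 : ℝ) ^ (Q x) else 0

noncomputable def hatσeven {n : ℕ} (x : Fin n → Bool) : ℝ :=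
  (Real.sqrt (2 ^ n))⁻¹ * ∑ y : Fin n → Bool, (-1 : ℝ) ^ (ip x y) * σeven y

lemma two_Q_add_wt {n : ℕ} (x : Fin n → Bool) : 2 * Q x + wt x = wt x ^ 2 := by
  have h : wt x ^ 2 = ∑ i : Fin n, ∑ j : Fin n, bit (x i) * bit (x j) := by
    rw [sq, wt, Finset.sum_mul_sum]
  have key : ∀ i j : Fin n, bit (x i) * bit (x j) =
      ((if i < j then bit (x i) * bit (x j) else 0) +
       (if j < i then bit (x j) * bit (x i) else 0)) +
      (if i = j then bit (x i) else 0) := by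
    intro i j
    rcases lt_trichotomy i j with hl | he | hg
    · simp [hl, not_lt.2 hl.le, hl.ne]
    · subst he; simp; cases x i <;> simp [bit]
    · simp [hg, not_lt.2 hg.le, hg.ne', mul_comm]
  have h2 : wt x ^ 2 =
      ((∑ i : Fin n, ∑ j : Fin n, if i < j then bit (x i) * bit (x j) else 0) +
       (∑ i : Fin n, ∑ j : Fin n, if j < i then bit (x j) * bit (x i) else 0)) +
      (∑ i : Fin n, ∑ j : Fin n, if i = j then bit (x i) else 0) := by
    rw [h, ← Finset.sum_add_distrib, ← Finset.sum_add_distrib]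
    exact Finset.sum_congr rfl fun i _ => by
      rw [← Finset.sum_add_distrib, ← Finset.sum_add_distrib]
      exact Finset.sum_congr rfl fun j _ => key i j
  have h3 : (∑ i : Fin n, ∑ j : Fin n, if j < i then bit (x j) * bit (x i) else 0) = Q x := by
    rw [Finset.sum_comm]; rfl
  have h4 : (∑ i : Fin n, ∑ j : Fin n, if i = j then bit (x i) else 0) = wt x := by
    unfold wt
    exact Finset.sum_congr rfl fun i _ => by simp
  rw [h2, h3, h4, Q]; ring

/-- σeven in closed cosine-like form via I^w -/
lemma σeven_eq {n : ℕ} (y : Fin n → Bool) :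
    σeven y = Real.sqrt 2 * (Complex.I ^ (wt y)).re := by
  unfold σeven
  rcases Nat.even_or_odd (wt y) with ⟨m, hm⟩ | ⟨m, hm⟩
  · have hw : wt y = 2 * m := by omega
    have hQ : 2 * Q y + 2 * m = 4 * m ^ 2 := by
      have h := two_Q_add_wt y
      rw [hw] at h
      rw [h]; ring
    have hpow : Complex.I ^ (wt y) = ((-1 : ℂ)) ^ m := by
      rw [hw, pow_mul, Complex.I_sq]
    rw [if_pos ⟨m, by omega⟩, hpow]
    have : ((-1 : ℂ) ^ m).re = (-1 : ℝ) ^ m := by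
      rcases Nat.even_or_odd m with hme | hmo
      · rw [hme.neg_one_pow, hme.neg_one_pow]; simp
      · rw [hmo.neg_one_pow, hmo.neg_one_pow]; simp
    rw [this]
    congr 1
    rcases Nat.even_or_odd m with hme | hmo
    · rw [hme.neg_one_pow]
      have : Even (Q y) := by rw [Nat.even_iff] at hme ⊢; omega
      rw [this.neg_one_pow]
    · rw [hmo.neg_one_pow]
      have : Odd (Q y) := by rw [Nat.odd_iff] at hmo ⊢; omega
      rw [this.neg_one_pow]
  · have hw : wt y = 2 * m + 1 := by omega
    have hpow : Complex.I ^ (wt y) = ((-1 : ℂ)) ^ m * Complex.I := by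
      rw [hw, pow_succ, pow_mul, Complex.I_sq]
    rw [if_neg (by rw [hw, Nat.even_iff]; omega), hpow]
    rcases Nat.even_or_odd m with hme | hmo
    · rw [hme.neg_one_pow]; simp
    · rw [hmo.neg_one_pow]; simp

lemma wt_le {n : ℕ} (x : Fin n → Bool) : wt x ≤ n := by
  unfold wt
  calc ∑ i : Fin n, bit (x i) ≤ ∑ _i : Fin n, 1 :=
        Finset.sum_le_sum fun i _ => by cases x i <;> simp [bit]
    _ = n := by simp

lemma one_add_I : (1 : ℂ) + Complex.I = (Real.sqrt 2 : ℝ) * Complex.exp ((Real.pi/4 : ℝ) * Complex.I) := by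
  rw [Complex.exp_mul_I, ← Complex.ofReal_cos, ← Complex.ofReal_sin,
    Real.cos_pi_div_four, Real.sin_pi_div_four]
  have h2 : Real.sqrt 2 * (Real.sqrt 2 / 2) = 1 := by
    rw [mul_div_assoc', Real.mul_self_sqrt (by norm_num)]; norm_num
  apply Complex.ext <;> simp [Complex.mul_re, Complex.mul_im, h2]

lemma one_sub_I : (1 : ℂ) - Complex.I = (Real.sqrt 2 : ℝ) * Complex.exp ((-(Real.pi/4) : ℝ) * Complex.I) := by
  have hc : ((-(Real.pi/4) : ℝ) : ℂ) * Complex.I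
      = starRingEnd ℂ (((Real.pi/4 : ℝ) : ℂ) * Complex.I) := by
    rw [map_mul, Complex.conj_I, Complex.conj_ofReal]
    push_cast; ring
  calc (1 : ℂ) - Complex.I = starRingEnd ℂ ((1:ℂ) + Complex.I) := by
        rw [map_add, map_one, Complex.conj_I]; ring
    _ = starRingEnd ℂ (((Real.sqrt 2 : ℝ) : ℂ) * Complex.exp ((Real.pi/4 : ℝ) * Complex.I)) := by
        rw [one_add_I]
    _ = (Real.sqrt 2 : ℝ) * Complex.exp ((-(Real.pi/4) : ℝ) * Complex.I) := by
        rw [map_mul, Complex.conj_ofReal, ← Complex.exp_conj, ← hc]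

lemma key_sum {n : ℕ} (x : Fin n → Bool) :
    (∑ y : Fin n → Bool, ((-1 : ℂ)) ^ (ip x y) * Complex.I ^ (wt y)) =
      (1 - Complex.I) ^ (wt x) * (1 + Complex.I) ^ (n - wt x) := by
  have hterm : ∀ y : Fin n → Bool,
      ((-1 : ℂ)) ^ (ip x y) * Complex.I ^ (wt y) =
      ∏ i : Fin n, (((-1 : ℂ)) ^ (bit (x i) * bit (y i)) * Complex.I ^ (bit (y i))) := by
    intro y
    rw [Finset.prod_mul_distrib, Finset.prod_pow_eq_pow_sum, Finset.prod_pow_eq_pow_sum]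
    rfl
  rw [Finset.sum_congr rfl fun y _ => hterm y]
  rw [← Fintype.prod_sum fun i b => ((-1 : ℂ)) ^ (bit (x i) * bit b) * Complex.I ^ (bit b)]
  have hfac : ∀ i : Fin n,
      (∑ b : Bool, ((-1 : ℂ)) ^ (bit (x i) * bit b) * Complex.I ^ (bit b)) =
      if x i then 1 - Complex.I else 1 + Complex.I := by
    intro i
    cases hx : x i <;> simp [Fintype.sum_bool, bit] <;> ring
  rw [Finset.prod_congr rfl fun i _ => hfac i]
  rw [Finset.prod_ite]
  have hcard1 : (Finset.univ.filter fun i => x i = true).card = wt x := by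
    rw [wt]
    rw [Finset.card_filter]
    exact Finset.sum_congr rfl fun i _ => by cases x i <;> simp [bit]
  have hcard2 : (Finset.univ.filter fun i => ¬ x i = true).card = n - wt x := by
    have := Finset.card_filter_add_card_filter_not (s := (Finset.univ : Finset (Fin n))) (p := fun i => x i = true)
    simp only [Finset.card_univ, Fintype.card_fin] at this
    omega
  rw [Finset.prod_const, Finset.prod_const, hcard1, hcard2]

lemma main_eq {n : ℕ} (x : Fin n → Bool) :
    hatσeven x = Real.sqrt 2 * Real.cos (Real.pi * ((n : ℝ) - 2 * (wt x : ℝ)) / 4) := by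
  set w := wt x with hw
  have hwle : w ≤ n := wt_le x
  have hsum : (∑ y : Fin n → Bool, (-1 : ℝ) ^ (ip x y) * σeven y) =
      Real.sqrt 2 * (∑ y : Fin n → Bool, ((-1 : ℂ)) ^ (ip x y) * Complex.I ^ (wt y)).re := by
    rw [Complex.re_sum, Finset.mul_sum]
    refine Finset.sum_congr rfl fun y _ => ?_
    rw [σeven_eq]
    have : (((-1 : ℂ)) ^ (ip x y) * Complex.I ^ (wt y)).re
        = (-1 : ℝ) ^ (ip x y) * (Complex.I ^ (wt y)).re := by
      have hre : ((-1 : ℂ)) ^ (ip x y) = (((-1 : ℝ) ^ (ip x y) : ℝ) : ℂ) := by push_cast; ring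
      rw [hre, Complex.re_ofReal_mul]
    rw [this]; ring
  have hval : (∑ y : Fin n → Bool, ((-1 : ℂ)) ^ (ip x y) * Complex.I ^ (wt y)) =
      ((Real.sqrt 2 ^ n : ℝ) : ℂ) * Complex.exp ((Real.pi * ((n : ℝ) - 2 * w) / 4 : ℝ) * Complex.I) := by
    rw [key_sum, one_sub_I, one_add_I, mul_pow, mul_pow, ← Complex.exp_nat_mul, ← Complex.exp_nat_mul]
    rw [mul_mul_mul_comm, ← Complex.exp_add, ← pow_add]
    rw [Nat.add_sub_cancel' hwle]
    congr 2
    · push_cast; ring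
    · have : ((n - w : ℕ) : ℂ) = (n : ℂ) - (w : ℂ) := by
        push_cast [Nat.cast_sub hwle]; ring
      rw [this]
      push_cast
      ring
  have hre : (∑ y : Fin n → Bool, ((-1 : ℂ)) ^ (ip x y) * Complex.I ^ (wt y)).re =
      Real.sqrt 2 ^ n * Real.cos (Real.pi * ((n : ℝ) - 2 * w) / 4) := by
    rw [hval, Complex.exp_mul_I, ← Complex.ofReal_cos, ← Complex.ofReal_sin, mul_add,
      ← Complex.ofReal_mul, ← mul_assoc, ← Complex.ofReal_mul]
    rw [Complex.add_re, Complex.ofReal_re, Complex.re_ofReal_mul, Complex.I_re, mul_zero, add_zero]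
  unfold hatσeven
  rw [hsum, hre]
  have hsq : Real.sqrt (2 ^ n) = Real.sqrt 2 ^ n := by
    have h : ((Real.sqrt 2) ^ n) ^ 2 = 2 ^ n := by
      rw [← pow_mul, mul_comm, pow_mul, Real.sq_sqrt (by norm_num)]
    rw [← h, Real.sqrt_sq (by positivity)]
  have hne : Real.sqrt 2 ^ n ≠ 0 := pow_ne_zero _ (Real.sqrt_ne_zero'.2 (by norm_num))
  rw [hsq]
  field_simp

theorem hatσeven_eq {n : ℕ} :
    (∀ x : Fin n → Bool,
      hatσeven x = Real.sqrt 2 * Real.cos (Real.pi * ((n : ℝ) - 2 * (wt x : ℝ)) / 4)) ∧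
    (Odd n → ∀ x : Fin n → Bool, |hatσeven x| = 1) := by
  refine ⟨fun x => main_eq x, fun hn x => ?_⟩
  rw [main_eq x]
  set θ := Real.pi * ((n : ℝ) - 2 * (wt x : ℝ)) / 4 with hθ
  have hcos2 : Real.cos (2 * θ) = 0 := by
    obtain ⟨k, hk⟩ := hn
    have hn' : (n : ℝ) = 2 * (k : ℝ) + 1 := by rw [hk]; push_cast; ring
    have h2θ : 2 * θ = ((k : ℝ) - (wt x : ℝ)) * Real.pi + Real.pi / 2 := by
      rw [hθ, hn']; ring
    rw [h2θ, Real.cos_add, Real.cos_pi_div_two, Real.sin_pi_div_two]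
    have hsin : Real.sin (((k : ℝ) - (wt x : ℝ)) * Real.pi) = 0 := by
      have : ((k : ℝ) - (wt x : ℝ)) = ((k - (wt x : ℤ) : ℤ) : ℝ) := by push_cast; ring
      rw [this, Real.sin_int_mul_pi]
    rw [hsin]; ring
  have hsq : (Real.sqrt 2 * Real.cos θ) ^ 2 = 1 := by
    have : Real.cos θ ^ 2 = 1/2 + Real.cos (2 * θ) / 2 := Real.cos_sq θ
    rw [mul_pow, this, hcos2, Real.sq_sqrt (by norm_num)]
    ring
  rw [← Real.sqrt_sq_eq_abs, hsq, Real.sqrt_one]
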